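/- Let m ≥ 3 and let u_k = (cos(2πk/m), sin(2πk/m)) ∈ ℝ² for k = 0, 1, …, m−1 be the radius vectors of the vertices of a regular m-gon centered at the origin. Then for every even r = 2j with 0 < 2j < m there exists a nonzero constant C ∈ ℝ such that for every ξ = (ξ₁, ξ₂) ∈ ℝ², the elementary symmetric polynomial e_{2j} applied to the tuple (⟨u_0, ξ⟩, …, ⟨u_{m-1}, ξ⟩) equals C · (ξ₁² + ξ₂²)^j. -/

import Mathlib

open Polynomial Complex Finset


/-- Lucas-type polynomials: `LP n` evaluated at `α + α⁻¹` gives `α^n + α⁻¹^n`. -/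
noncomputable def LP : ℕ → Polynomial ℝ
  | 0 => 2
  | 1 => Polynomial.X
  | (n+2) => Polynomial.X * LP (n+1) - LP n

lemma LP_coeff_eq_zero : ∀ n k, n < k → (LP n).coeff k = 0 := by
  intro n
  induction n using Nat.strong_induction_on with
  | _ n ih =>
    match n with
    | 0 =>
      intro k hk
      rcases Nat.exists_eq_add_of_lt hk with ⟨l, rfl⟩
      rw [LP]
      simp [coeff_ofNat_succ]
    | 1 => intro k hk; rw [LP, coeff_X, if_neg (by omega)]
    | (n+2) =>
      intro k hk
      rw [LP]
      rcases Nat.exists_eq_add_of_lt hk with ⟨l, rfl⟩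
      simp only [coeff_sub, show n + 2 + l + 1 = (n + 2 + l) + 1 from rfl, coeff_X_mul]
      rw [ih (n+1) (by omega) _ (by omega), ih n (by omega) _ (by omega), sub_zero]

lemma LP_coeff_sign : ∀ n j, 2*j ≤ n → 0 < (-1:ℝ)^j * (LP n).coeff (n - 2*j) := by
  intro n
  induction n using Nat.strong_induction_on with
  | _ n ih =>
    match n with
    | 0 =>
      intro j hj
      have : j = 0 := by omega
      subst this
      rw [LP]; norm_num
    | 1 =>
      intro j hj
      have : j = 0 := by omega
      subst this
      rw [LP]; simp [coeff_X]
    | (n+2) =>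
      intro j hj
      rw [LP]
      rcases Nat.eq_zero_or_pos j with rfl | hjpos
      · simp only [pow_zero, one_mul, Nat.mul_zero, Nat.sub_zero, coeff_sub]
        rw [show n + 1 + 1 = (n+1) + 1 from rfl, coeff_X_mul,
          LP_coeff_eq_zero n (n+2) (by omega)]
        have := ih (n+1) (by omega) 0 (by omega)
        simpa using this
      · have hs : (-1:ℝ)^j = -(-1:ℝ)^(j-1) := by
          obtain ⟨i, rfl⟩ : ∃ i, j = i + 1 := ⟨j-1, by omega⟩
          simp [pow_succ]
        rcases Nat.lt_or_ge (2*j) (n+2) with hlt | hge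
        · -- 2*j ≤ n+1, index n+2-2*j ≥ 1
          have h1 : n + 1 + 1 - 2*j = (n + 1 - 2*j) + 1 := by omega
          rw [coeff_sub, h1, coeff_X_mul]
          have e1 := ih (n+1) (by omega) j (by omega)
          have e2 := ih n (by omega) (j-1) (by omega)
          have h2 : n - 2*(j-1) = (n+1-2*j) + 1 := by omega
          rw [h2] at e2
          rw [hs] at e1 ⊢
          ring_nf at e1 e2 ⊢
          linarith
        · -- 2*j = n+2, index 0
          have h0 : n + 1 + 1 - 2*j = 0 := by omega
          rw [h0, coeff_sub, mul_coeff_zero, coeff_X_zero, zero_mul, zero_sub]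
          have e2 := ih n (by omega) (j-1) (by omega)
          have h2 : n - 2*(j-1) = 0 := by omega
          rw [h2] at e2
          rw [hs]
          ring_nf at e2 ⊢
          linarith

lemma LP_eval (α : ℂ) (hα : α ≠ 0) :
    ∀ n, Polynomial.eval (α + α⁻¹) ((LP n).map (algebraMap ℝ ℂ)) = α^n + α⁻¹^n := by
  have key : ∀ n, Polynomial.eval (α + α⁻¹) ((LP n).map (algebraMap ℝ ℂ)) = α^n + α⁻¹^n ∧
      Polynomial.eval (α + α⁻¹) ((LP (n+1)).map (algebraMap ℝ ℂ)) = α^(n+1) + α⁻¹^(n+1) := by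
    intro n
    induction n with
    | zero =>
      constructor
      · rw [LP]; simp; norm_num
      · rw [LP]; simp
    | succ n ihn =>
      refine ⟨ihn.2, ?_⟩
      rw [show n + 1 + 1 = n + 2 from rfl, LP]
      simp only [Polynomial.map_sub, Polynomial.map_mul, Polynomial.map_X, eval_sub, eval_mul,
        eval_X, ihn.1, ihn.2]
      linear_combination (α^n + α⁻¹^n) * (mul_inv_cancel₀ hα)
  exact fun n => (key n).1

section
variable (m : ℕ) (hm : 3 ≤ m)

lemma prim_root (hm : 3 ≤ m) : IsPrimitiveRoot (Complex.exp (2 * Real.pi * I / m)) m :=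
  Complex.isPrimitiveRoot_exp m (by omega)

lemma prod_z_sub (hm : 3 ≤ m) (z : ℂ) :
    ∏ k ∈ Finset.range m, (z - Complex.exp (2 * Real.pi * I / m) ^ k) = z ^ m - 1 := by
  have h := X_pow_sub_C_eq_prod (prim_root m hm) (show 0 < m by omega)
    (show (1:ℂ)^m = 1 by simp)
  have := congrArg (Polynomial.eval z) h
  simpa [eval_prod] using this.symm

lemma prod_z_add (hm : 3 ≤ m) (z : ℂ) :
    ∏ k ∈ Finset.range m, (Complex.exp (2 * Real.pi * I / m) ^ k + z)
      = z ^ m + (-1:ℂ)^(m-1) := by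
  have h := prod_z_sub m hm (-z)
  have h2 : ∏ k ∈ Finset.range m, (Complex.exp (2 * Real.pi * I / m) ^ k + z)
      = (-1:ℂ)^m * ((-z)^m - 1) := by
    rw [← h]
    calc ∏ k ∈ Finset.range m, (Complex.exp (2 * Real.pi * I / m) ^ k + z)
        = ∏ k ∈ Finset.range m, ((-1) * (-z - Complex.exp (2 * Real.pi * I / m) ^ k)) :=
          Finset.prod_congr rfl (by intros; ring)
      _ = _ := by rw [prod_mul_distrib, prod_const, card_range]
  obtain ⟨i, rfl⟩ : ∃ i, m = i + 1 := ⟨m-1, by omega⟩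
  rw [h2, neg_pow]
  have hs2 : ((-1:ℂ)^(i+1))^2 = 1 := by rw [← pow_mul]; exact Even.neg_one_pow ⟨i+1, by ring⟩
  have hsi : ((-1:ℂ))^(i+1-1) = -(-1:ℂ)^(i+1) := by
    simp only [Nat.add_sub_cancel, pow_succ]; ring
  rw [hsi]
  linear_combination (z^(i+1)) * hs2

lemma prod_c (hm : 3 ≤ m) :
    ∏ k ∈ Finset.range m, Complex.exp (2 * Real.pi * I / m) ^ k = (-1:ℂ)^(m-1) := by
  have h := prod_z_sub m hm 0
  have h2 : ∏ k ∈ Finset.range m, (0 - Complex.exp (2 * Real.pi * I / m) ^ k)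
      = (-1:ℂ)^m * ∏ k ∈ Finset.range m, Complex.exp (2 * Real.pi * I / m) ^ k := by
    calc ∏ k ∈ Finset.range m, (0 - Complex.exp (2 * Real.pi * I / m) ^ k)
        = ∏ k ∈ Finset.range m, ((-1) * Complex.exp (2 * Real.pi * I / m) ^ k) :=
          Finset.prod_congr rfl (by intros; ring)
      _ = _ := by rw [prod_mul_distrib, prod_const, card_range]
  rw [h2] at h
  simp only [ne_eq, zero_pow (by omega : m ≠ 0), zero_sub] at h
  have hkey : (-1:ℂ)^m * (-1:ℂ)^(m-1) = -1 := by
    rw [← pow_add]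
    have : Odd (m + (m-1)) := ⟨m-1, by omega⟩
    exact this.neg_one_pow
  have hne : ((-1:ℂ)^m) ≠ 0 := pow_ne_zero _ (by norm_num)
  exact mul_left_cancel₀ hne (h.trans hkey.symm)

end

section
variable (m : ℕ)

lemma prod_factor (hm : 3 ≤ m) (x : ℂ) :
    ∏ k ∈ Finset.range m,
        (x + Complex.exp (2 * Real.pi * I / m) ^ k + (Complex.exp (2 * Real.pi * I / m) ^ k)⁻¹)
      = Polynomial.eval x ((LP m).map (algebraMap ℝ ℂ)) + 2 * (-1:ℂ)^(m-1) := by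
  set c := Complex.exp (2 * Real.pi * I / m) with hc
  have hcne : c ≠ 0 := Complex.exp_ne_zero _
  -- get a root α of t² - x t + 1
  obtain ⟨α, hα⟩ : ∃ α : ℂ, α^2 - x*α + 1 = 0 := by
    obtain ⟨α, hα⟩ := Complex.exists_root (f := Polynomial.X^2 - Polynomial.C x * Polynomial.X
      + Polynomial.C 1) (by
        have h1 : (Polynomial.X^2 - Polynomial.C x * Polynomial.X + Polynomial.C 1 : Polynomial ℂ)
            = Polynomial.C 1 * Polynomial.X^2 + Polynomial.C (-x) * Polynomial.X + Polynomial.C 1 := by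
          rw [Polynomial.C_neg, Polynomial.C_1]; ring
        rw [h1, Polynomial.degree_quadratic (by norm_num)]
        norm_num)
    refine ⟨α, ?_⟩
    simpa [Polynomial.IsRoot] using hα
  have hα0 : α ≠ 0 := by
    intro h; rw [h] at hα; simp at hα
  have hx : x = α + α⁻¹ := by
    field_simp
    linear_combination -hα
  -- factor each term
  have hfac : ∀ k ∈ Finset.range m, x + c ^ k + (c ^ k)⁻¹
      = (c ^ k)⁻¹ * ((c ^ k + α) * (c ^ k + α⁻¹)) := by
    intro k _
    have hck : (c:ℂ) ^ k ≠ 0 := pow_ne_zero _ hcne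
    field_simp
    ring_nf
    linear_combination (-(c:ℂ)^k) * hα
  rw [Finset.prod_congr rfl hfac, Finset.prod_mul_distrib, Finset.prod_mul_distrib,
    Finset.prod_inv_distrib, prod_c m hm, prod_z_add m hm α, prod_z_add m hm α⁻¹]
  rw [hx, LP_eval α hα0 m]
  have hss : ((-1:ℂ)^(m-1)) * ((-1:ℂ)^(m-1)) = 1 := by
    rw [← pow_add]; exact Even.neg_one_pow ⟨m-1, by ring⟩
  have hsinv : ((-1:ℂ)^(m-1))⁻¹ = (-1:ℂ)^(m-1) := inv_eq_of_mul_eq_one_right hss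
  have hAB : α^m * (α^m)⁻¹ = 1 := mul_inv_cancel₀ (pow_ne_zero _ hα0)
  rw [inv_pow, hsinv]
  linear_combination ((-1:ℂ)^(m-1)) * hAB + (α^m + (α^m)⁻¹ + (-1:ℂ)^(m-1)) * hss

end

lemma esymm_cos_ne_zero (m : ℕ) (hm : 3 ≤ m) (j : ℕ) (h0 : 0 < 2*j) (hjm : 2*j < m) :
    (∑ S ∈ (Finset.univ : Finset (Fin m)).powersetCard (2*j), ∏ k ∈ S,
      (Complex.exp (2 * Real.pi * I / m) ^ (k:ℕ)
        + (Complex.exp (2 * Real.pi * I / m) ^ (k:ℕ))⁻¹)) ≠ 0 := by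
  set c := Complex.exp (2 * Real.pi * I / m) with hc
  set P : Polynomial ℂ :=
    ∏ k ∈ (Finset.univ : Finset (Fin m)), (Polynomial.X + Polynomial.C (c^(k:ℕ) + (c^(k:ℕ))⁻¹))
    with hP
  have hcard : (Finset.univ : Finset (Fin m)).card = m := by simp
  have hcoeff : P.coeff (m - 2*j)
      = ∑ S ∈ (Finset.univ : Finset (Fin m)).powersetCard (2*j), ∏ k ∈ S,
          (c^(k:ℕ) + (c^(k:ℕ))⁻¹) := by
    rw [hP, Finset.prod_X_add_C_coeff _ _ (by rw [hcard]; omega)]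
    rw [hcard, Nat.sub_sub_self (le_of_lt hjm)]
  have hPeq : P = (LP m).map (algebraMap ℝ ℂ) + Polynomial.C (2*(-1:ℂ)^(m-1)) := by
    apply Polynomial.funext
    intro x
    rw [hP, Polynomial.eval_prod, Polynomial.eval_add, Polynomial.eval_C]
    have := prod_factor m hm x
    rw [← this]
    rw [← Fin.prod_univ_eq_prod_range (fun k => x + c^k + (c^k)⁻¹) m]
    exact Finset.prod_congr rfl (fun k _ => by
      rw [Polynomial.eval_add, Polynomial.eval_X, Polynomial.eval_C]; ring)
  rw [← hcoeff, hPeq]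
  have hidx : m - 2*j ≠ 0 := by omega
  rw [Polynomial.coeff_add, Polynomial.coeff_map, Polynomial.coeff_C, if_neg hidx, add_zero]
  have hsign := LP_coeff_sign m j (le_of_lt hjm)
  have hne : (LP m).coeff (m - 2*j) ≠ 0 := by
    intro h; rw [h] at hsign; simp at hsign
  simpa using hne

lemma pow_mod_eq (m : ℕ) (z : ℂ) (hz : z ^ m = 1) (a : ℕ) : z ^ (a % m) = z ^ a := by
  conv_rhs => rw [← Nat.div_add_mod a m, pow_add, pow_mul, hz, one_pow, one_mul]

lemma pow_val_add_one (m : ℕ) (hm : 3 ≤ m) (z : ℂ) (hz : z ^ m = 1) (x : Fin m) :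
    haveI : NeZero m := ⟨by omega⟩
    z ^ (((x + 1 : Fin m)) : ℕ) = z * z ^ (x : ℕ) := by
  haveI : NeZero m := ⟨by omega⟩
  have h1 : ((1 : Fin m) : ℕ) = 1 := by
    rw [Fin.val_one']
    exact Nat.mod_eq_of_lt (by omega)
  have : ((x + 1 : Fin m) : ℕ) = ((x : ℕ) + 1) % m := by
    rw [Fin.val_add, h1]
  rw [this, pow_mod_eq m z hz, pow_succ]
  ring

lemma shift_sum_eq_zero (m : ℕ) (hm : 3 ≤ m) (t s : ℕ) (hts : t ≠ s) (ht : t < m) (hs : s < m) :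
    ∑ p ∈ Finset.univ.filter (fun p : Finset (Fin m) × Finset (Fin m) =>
        Disjoint p.1 p.2 ∧ p.1.card = t ∧ p.2.card = s),
      ((∏ k ∈ p.1, Complex.exp (2 * Real.pi * I / m) ^ (k:ℕ)) *
       (∏ k ∈ p.2, (Complex.exp (2 * Real.pi * I / m) ^ (k:ℕ))⁻¹)) = 0 := by
  haveI : NeZero m := ⟨by omega⟩
  set c := Complex.exp (2 * Real.pi * I / m) with hc
  have hprim : IsPrimitiveRoot c m := Complex.isPrimitiveRoot_exp m (by omega)
  have hcm : c ^ m = 1 := hprim.pow_eq_one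
  have hcm' : (c⁻¹) ^ m = 1 := by rw [inv_pow, hcm, inv_one]
  set Q := Finset.univ.filter (fun p : Finset (Fin m) × Finset (Fin m) =>
      Disjoint p.1 p.2 ∧ p.1.card = t ∧ p.2.card = s) with hQ
  set φ : Finset (Fin m) × Finset (Fin m) → ℂ := fun p =>
      ((∏ k ∈ p.1, c ^ (k:ℕ)) * (∏ k ∈ p.2, (c⁻¹) ^ (k:ℕ))) with hφ
  set e : Fin m ≃ Fin m := Equiv.addRight 1 with he
  have hmem : ∀ p : Finset (Fin m) × Finset (Fin m), p ∈ Q →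
      (p.1.map e.toEmbedding, p.2.map e.toEmbedding) ∈ Q := by
    intro p hp
    rw [hQ, mem_filter] at hp ⊢
    refine ⟨mem_univ _, ?_, ?_, ?_⟩
    · exact (Finset.disjoint_map _).2 hp.2.1
    · rw [Finset.card_map]; exact hp.2.2.1
    · rw [Finset.card_map]; exact hp.2.2.2
  have hmem' : ∀ p : Finset (Fin m) × Finset (Fin m), p ∈ Q →
      (p.1.map e.symm.toEmbedding, p.2.map e.symm.toEmbedding) ∈ Q := by
    intro p hp
    rw [hQ, mem_filter] at hp ⊢
    refine ⟨mem_univ _, ?_, ?_, ?_⟩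
    · exact (Finset.disjoint_map _).2 hp.2.1
    · rw [Finset.card_map]; exact hp.2.2.1
    · rw [Finset.card_map]; exact hp.2.2.2
  have hshift : ∀ p : Finset (Fin m) × Finset (Fin m), p ∈ Q →
      φ (p.1.map e.toEmbedding, p.2.map e.toEmbedding) = (c ^ t * (c⁻¹) ^ s) * φ p := by
    intro p hp
    rw [hQ, mem_filter] at hp
    obtain ⟨-, hdisj, hct, hcs⟩ := hp
    rw [hφ]
    simp only [Finset.prod_map]
    have h1 : ∀ k ∈ p.1, c ^ ((e.toEmbedding k : Fin m) : ℕ) = c * c ^ (k : ℕ) := by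
      intro k _
      exact pow_val_add_one m hm c hcm k
    have h2 : ∀ k ∈ p.2, (c⁻¹) ^ ((e.toEmbedding k : Fin m) : ℕ) = c⁻¹ * (c⁻¹) ^ (k : ℕ) := by
      intro k _
      exact pow_val_add_one m hm c⁻¹ hcm' k
    rw [Finset.prod_congr rfl h1, Finset.prod_congr rfl h2, Finset.prod_mul_distrib,
      Finset.prod_mul_distrib, Finset.prod_const, Finset.prod_const, hct, hcs]
    ring
  have key : ∑ p ∈ Q, φ p = (c ^ t * (c⁻¹) ^ s) * ∑ p ∈ Q, φ p := by
    rw [Finset.mul_sum]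
    apply Finset.sum_nbij' (i := fun p : Finset (Fin m) × Finset (Fin m) =>
        (p.1.map e.symm.toEmbedding, p.2.map e.symm.toEmbedding))
      (j := fun p : Finset (Fin m) × Finset (Fin m) =>
        (p.1.map e.toEmbedding, p.2.map e.toEmbedding))
    · exact hmem'
    · exact hmem
    · intro p _
      simp [Finset.map_map]
    · intro p _
      simp [Finset.map_map]
    · intro p hp
      have h2 := hshift _ (hmem' _ hp)
      simp only [Finset.map_map] at h2
      rw [show p.1.map (e.symm.toEmbedding.trans e.toEmbedding) = p.1 from by ext a; simp,
        show p.2.map (e.symm.toEmbedding.trans e.toEmbedding) = p.2 from by ext a; simp] at h2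
      simpa using h2
  have hne : c ^ t * (c⁻¹) ^ s ≠ 1 := by
    intro h
    apply hts
    apply hprim.pow_inj ht hs
    have hcs0 : (c:ℂ) ^ s ≠ 0 := pow_ne_zero _ (Complex.exp_ne_zero _)
    field_simp at h
    rw [one_div, inv_pow, mul_inv_eq_one₀ hcs0] at h
    exact h
  have hzero : (1 - c ^ t * (c⁻¹) ^ s) * ∑ p ∈ Q, φ p = 0 := by
    linear_combination key
  rcases mul_eq_zero.1 hzero with h | h
  · exact absurd (by linear_combination -h) hne
  · simpa [← inv_pow] using h

noncomputable def DD (m j : ℕ) : ℂ :=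
  ∑ p ∈ Finset.univ.filter (fun p : Finset (Fin m) × Finset (Fin m) =>
      Disjoint p.1 p.2 ∧ p.1.card = j ∧ p.2.card = j),
    ((∏ k ∈ p.1, Complex.exp (2 * Real.pi * I / m) ^ (k:ℕ)) *
     (∏ k ∈ p.2, (Complex.exp (2 * Real.pi * I / m) ^ (k:ℕ))⁻¹))

lemma main_identity (m : ℕ) (hm : 3 ≤ m) (j : ℕ) (h0 : 0 < 2*j) (hjm : 2*j < m) (u v : ℂ) :
    ∑ S ∈ (Finset.univ : Finset (Fin m)).powersetCard (2*j),
      ∏ k ∈ S, (Complex.exp (2 * Real.pi * I / m) ^ (k:ℕ) * v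
        + (Complex.exp (2 * Real.pi * I / m) ^ (k:ℕ))⁻¹ * u)
    = (u * v) ^ j * DD m j := by
  classical
  set c := Complex.exp (2 * Real.pi * I / m) with hc
  set f : Fin m → ℂ := fun k => c ^ (k:ℕ) * v with hf
  set g : Fin m → ℂ := fun k => (c ^ (k:ℕ))⁻¹ * u with hg
  set Q : Finset (Finset (Fin m) × Finset (Fin m)) :=
    Finset.univ.filter (fun p => Disjoint p.1 p.2 ∧ p.1.card + p.2.card = 2*j) with hQ
  have step1 : ∑ S ∈ (Finset.univ : Finset (Fin m)).powersetCard (2*j), ∏ k ∈ S, (f k + g k)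
      = ∑ S ∈ (Finset.univ : Finset (Fin m)).powersetCard (2*j),
          ∑ T ∈ S.powerset, (∏ k ∈ T, f k) * ∏ k ∈ S \ T, g k :=
    Finset.sum_congr rfl (fun S _ => Finset.prod_add f g S)
  have step2 : ∑ S ∈ (Finset.univ : Finset (Fin m)).powersetCard (2*j),
          ∑ T ∈ S.powerset, (∏ k ∈ T, f k) * ∏ k ∈ S \ T, g k
      = ∑ p ∈ Q, (∏ k ∈ p.1, f k) * ∏ k ∈ p.2, g k := by
    rw [Finset.sum_sigma']
    apply Finset.sum_nbij' (i := fun x => (x.2, x.1 \ x.2))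
      (j := fun p => ⟨p.1 ∪ p.2, p.1⟩)
    · intro x hx
      rw [Finset.mem_sigma, Finset.mem_powersetCard_univ, Finset.mem_powerset] at hx
      rw [hQ, Finset.mem_filter]
      exact ⟨Finset.mem_univ _, Finset.disjoint_sdiff,
        by rw [add_comm, Finset.card_sdiff_add_card_eq_card hx.2, hx.1]⟩
    · intro p hp
      rw [hQ, Finset.mem_filter] at hp
      rw [Finset.mem_sigma, Finset.mem_powersetCard_univ]
      refine ⟨by rw [Finset.card_union_of_disjoint hp.2.1, hp.2.2], ?_⟩
      rw [Finset.mem_powerset]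
      exact Finset.subset_union_left
    · intro x hx
      rw [Finset.mem_sigma, Finset.mem_powersetCard_univ, Finset.mem_powerset] at hx
      exact Sigma.ext (Finset.union_sdiff_of_subset hx.2) (by simp)
    · intro p hp
      rw [hQ, Finset.mem_filter] at hp
      have := Finset.union_sdiff_cancel_left hp.2.1
      simp only [this]
    · intro x _
      rfl
  rw [step1, step2]
  have hmaps : ∀ p ∈ Q, p.1.card ∈ Finset.range (2*j+1) := by
    intro p hp
    rw [hQ, Finset.mem_filter] at hp
    rw [Finset.mem_range]
    omega
  rw [← Finset.sum_fiberwise_of_maps_to hmaps]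
  have hfiber : ∀ t, t ≤ 2*j → Q.filter (fun p => p.1.card = t)
      = Finset.univ.filter (fun p : Finset (Fin m) × Finset (Fin m) =>
          Disjoint p.1 p.2 ∧ p.1.card = t ∧ p.2.card = 2*j - t) := by
    intro t ht
    ext p
    simp only [hQ, Finset.mem_filter, Finset.filter_filter, Finset.mem_univ, true_and]
    constructor
    · rintro ⟨⟨hd, hcard⟩, hct⟩
      exact ⟨hd, hct, by omega⟩
    · rintro ⟨hd, hct, hcs⟩
      exact ⟨⟨hd, by omega⟩, hct⟩
  rw [Finset.sum_eq_single_of_mem j (by rw [Finset.mem_range]; omega)]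
  · -- the diagonal fiber
    rw [hfiber j (by omega)]
    have : ∀ p ∈ Finset.univ.filter (fun p : Finset (Fin m) × Finset (Fin m) =>
        Disjoint p.1 p.2 ∧ p.1.card = j ∧ p.2.card = 2*j - j),
        (∏ k ∈ p.1, f k) * ∏ k ∈ p.2, g k
          = (u*v)^j * (((∏ k ∈ p.1, c ^ (k:ℕ)) * (∏ k ∈ p.2, (c ^ (k:ℕ))⁻¹))) := by
      intro p hp
      rw [Finset.mem_filter] at hp
      obtain ⟨-, hd, h1, h2⟩ := hp
      rw [hf, hg]
      simp only
      rw [Finset.prod_mul_distrib, Finset.prod_mul_distrib, Finset.prod_const,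
        Finset.prod_const, h1, h2]
      have : 2*j - j = j := by omega
      rw [this, mul_pow]
      ring
    rw [Finset.sum_congr rfl this, ← Finset.mul_sum, DD]
    have : 2*j - j = j := by omega
    rw [this]
  · -- off-diagonal fibers vanish
    intro t htr htj
    rw [Finset.mem_range] at htr
    rw [hfiber t (by omega)]
    have : ∀ p ∈ Finset.univ.filter (fun p : Finset (Fin m) × Finset (Fin m) =>
        Disjoint p.1 p.2 ∧ p.1.card = t ∧ p.2.card = 2*j - t),
        (∏ k ∈ p.1, f k) * ∏ k ∈ p.2, g k
          = (v^t * u^(2*j-t)) * (((∏ k ∈ p.1, c ^ (k:ℕ)) * (∏ k ∈ p.2, (c ^ (k:ℕ))⁻¹))) := by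
      intro p hp
      rw [Finset.mem_filter] at hp
      obtain ⟨-, hd, h1, h2⟩ := hp
      rw [hf, hg]
      simp only
      rw [Finset.prod_mul_distrib, Finset.prod_mul_distrib, Finset.prod_const,
        Finset.prod_const, h1, h2]
      ring
    rw [Finset.sum_congr rfl this, ← Finset.mul_sum,
      shift_sum_eq_zero m hm t (2*j-t) (by omega) (by omega) (by omega), mul_zero]

lemma DD_ne_zero (m : ℕ) (hm : 3 ≤ m) (j : ℕ) (h0 : 0 < 2*j) (hjm : 2*j < m) :
    DD m j ≠ 0 := by
  have h := main_identity m hm j h0 hjm 1 1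
  have h2 := esymm_cos_ne_zero m hm j h0 hjm
  simp only [mul_one, one_pow, one_mul] at h
  exact h ▸ h2

lemma factor_cast (m : ℕ) (hm : 3 ≤ m) (k : Fin m) (ξ₁ ξ₂ : ℝ) :
    ((Real.cos (2 * Real.pi * (k:ℕ) / m) * ξ₁ + Real.sin (2 * Real.pi * (k:ℕ) / m) * ξ₂ : ℝ) : ℂ)
    = (Complex.exp (2 * Real.pi * I / m) ^ (k:ℕ) * ((ξ₁:ℂ) - I * ξ₂)
      + (Complex.exp (2 * Real.pi * I / m) ^ (k:ℕ))⁻¹ * ((ξ₁:ℂ) + I * ξ₂)) / 2 := by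
  have hm0 : (m:ℂ) ≠ 0 := Nat.cast_ne_zero.2 (by omega)
  set θ : ℝ := 2 * Real.pi * (k:ℕ) / m with hθ
  have hck : Complex.exp (2 * Real.pi * I / m) ^ (k:ℕ) = Complex.exp ((θ:ℂ) * I) := by
    rw [← Complex.exp_nat_mul]
    congr 1
    push_cast [hθ]
    field_simp
  have hck' : (Complex.exp (2 * Real.pi * I / m) ^ (k:ℕ))⁻¹ = Complex.exp (-(θ:ℂ) * I) := by
    rw [hck, ← Complex.exp_neg]
    congr 1
    ring
  rw [hck', hck, Complex.exp_mul_I, Complex.exp_mul_I, Complex.cos_neg, Complex.sin_neg]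
  push_cast
  linear_combination ((ξ₂:ℂ) * Complex.sin (θ:ℂ)) * Complex.I_sq

theorem esymm_even_regular_polygon_eq_laplacian_power (m : ℕ) (hm : 3 ≤ m)
    (j : ℕ) (h0 : 0 < 2 * j) (hjm : 2 * j < m) :
    ∃ C : ℝ, C ≠ 0 ∧ ∀ ξ : ℝ × ℝ,
      ∑ S ∈ (Finset.univ : Finset (Fin m)).powersetCard (2 * j),
        ∏ k ∈ S,
          (Real.cos (2 * Real.pi * (k : ℕ) / m) * ξ.1 +
            Real.sin (2 * Real.pi * (k : ℕ) / m) * ξ.2)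
        = C * (ξ.1 ^ 2 + ξ.2 ^ 2) ^ j := by
  classical
  set c := Complex.exp (2 * Real.pi * I / m) with hc
  -- the complexified value of the sum, for any ξ
  have key : ∀ ξ₁ ξ₂ : ℝ,
      ((∑ S ∈ (Finset.univ : Finset (Fin m)).powersetCard (2 * j),
        ∏ k ∈ S, (Real.cos (2 * Real.pi * (k : ℕ) / m) * ξ₁ +
            Real.sin (2 * Real.pi * (k : ℕ) / m) * ξ₂) : ℝ) : ℂ)
      = ((((ξ₁:ℂ) + I * ξ₂) * ((ξ₁:ℂ) - I * ξ₂)) ^ j * DD m j) / 4^j := by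
    intro ξ₁ ξ₂
    have hterm : ∀ S ∈ (Finset.univ : Finset (Fin m)).powersetCard (2 * j),
        ∏ k ∈ S, ((Real.cos (2 * Real.pi * (k : ℕ) / m) * ξ₁ +
            Real.sin (2 * Real.pi * (k : ℕ) / m) * ξ₂ : ℝ) : ℂ)
        = (∏ k ∈ S, (c ^ (k:ℕ) * ((ξ₁:ℂ) - I * ξ₂) + (c ^ (k:ℕ))⁻¹ * ((ξ₁:ℂ) + I * ξ₂))) / 4^j := by
      intro S hS
      rw [Finset.mem_powersetCard_univ] at hS
      rw [Finset.prod_congr rfl (fun k _ => factor_cast m hm k ξ₁ ξ₂),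
        Finset.prod_div_distrib, Finset.prod_const, hS]
      congr 1
      rw [pow_mul]
      norm_num
    have hterm2 : ∀ S ∈ (Finset.univ : Finset (Fin m)).powersetCard (2 * j),
        ((∏ k ∈ S, (Real.cos (2 * Real.pi * (k : ℕ) / m) * ξ₁ +
            Real.sin (2 * Real.pi * (k : ℕ) / m) * ξ₂) : ℝ) : ℂ)
        = (∏ k ∈ S, (c ^ (k:ℕ) * ((ξ₁:ℂ) - I * ξ₂) + (c ^ (k:ℕ))⁻¹ * ((ξ₁:ℂ) + I * ξ₂))) / 4^j := by
      intro S hS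
      rw [Complex.ofReal_prod]
      exact hterm S hS
    rw [Complex.ofReal_sum, Finset.sum_congr rfl hterm2,
      ← Finset.sum_div, main_identity m hm j h0 hjm (((ξ₁:ℂ) + I * ξ₂)) (((ξ₁:ℂ) - I * ξ₂))]
  -- the constant
  refine ⟨∑ S ∈ (Finset.univ : Finset (Fin m)).powersetCard (2 * j),
        ∏ k ∈ S, (Real.cos (2 * Real.pi * (k : ℕ) / m) * 1 +
            Real.sin (2 * Real.pi * (k : ℕ) / m) * 0), ?_, ?_⟩
  · intro hC0
    have h1 := key 1 0
    rw [hC0] at h1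
    simp only [Complex.ofReal_zero, Complex.ofReal_one, mul_zero, add_zero, sub_zero, mul_one,
      one_mul] at h1
    have hDD := DD_ne_zero m hm j h0 hjm
    apply hDD
    have h4 : ((4:ℂ))^j ≠ 0 := pow_ne_zero _ (by norm_num)
    field_simp at h1
    simpa using h1.symm
  · intro ξ
    apply Complex.ofReal_injective
    rw [Complex.ofReal_mul]
    rw [key ξ.1 ξ.2, key 1 0]
    have huv : (((ξ.1:ℂ) + I * ξ.2) * ((ξ.1:ℂ) - I * ξ.2)) = ((ξ.1:ℂ)^2 + (ξ.2:ℂ)^2) := by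
      linear_combination (-(ξ.2:ℂ)^2) * Complex.I_sq
    rw [huv]
    push_cast
    simp only [mul_zero, add_zero, sub_zero, mul_one, one_mul]
    field_simp
    ring
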